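/- Let (x_i, y_i) ∈ ℝ² × ℝ², i = 1,…,m, be given, and let P₁ = (I 0) and P₂ = (A b) be finite cameras (A ∈ ℝ^{3×3} nonsingular, b ∈ ℝ³). If there exist w_i ∈ ℝ³ such that (P₁, P₂, {ŵ_i}) is a reconstruction of {(x_i,y_i)}, then there exists a fundamental matrix associated to {(x_i,y_i)}: a real 3×3 matrix F of rank two satisfying ŷ_iᵀ F x̂_i = 0 for all i = 1,…,m. -/

import Mathlib

open Matrix

noncomputable section

/-- For `u ∈ ℝⁿ`, `hat u = (u, 1)ᵀ ∈ ℝⁿ⁺¹`. -/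
def hat {n : ℕ} (u : Fin n → ℝ) : Fin (n + 1) → ℝ := Fin.snoc u 1

/-- The 3×4 matrix `(A b)` with left 3×3 block `A` and last column `b`. -/
def cam (A : Matrix (Fin 3) (Fin 3) ℝ) (b : Fin 3 → ℝ) : Matrix (Fin 3) (Fin 4) ℝ :=
  Matrix.of fun i => Fin.snoc (A i) (b i)

/-- The left 3×3 block of a 3×4 matrix. -/
def leftBlock (P : Matrix (Fin 3) (Fin 4) ℝ) : Matrix (Fin 3) (Fin 3) ℝ :=
  P.submatrix id Fin.castSucc

/-- A (projective) camera is a real 3×4 matrix of rank 3. -/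
def IsCamera (P : Matrix (Fin 3) (Fin 4) ℝ) : Prop := P.rank = 3

/-- A finite camera: the left 3×3 block is nonsingular. -/
def IsFiniteCamera (P : Matrix (Fin 3) (Fin 4) ℝ) : Prop := IsUnit (leftBlock P).det

/-- Two cameras are coincident if their camera centers agree up to a nonzero scale;
for rank-3 cameras the center is the (one-dimensional) kernel, so this says the two
cameras share a common nonzero kernel vector. -/
def Coincident (P Q : Matrix (Fin 3) (Fin 4) ℝ) : Prop :=
  ∃ c : Fin 4 → ℝ, c ≠ 0 ∧ P.mulVec c = 0 ∧ Q.mulVec c = 0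

/-- `u` is a nonzero scalar multiple of `v`. -/
def SimEq {n : ℕ} (u v : Fin n → ℝ) : Prop := ∃ c : ℝ, c ≠ 0 ∧ u = c • v

/-- The skew-symmetric matrix `[v]ₓ` with `[v]ₓ w = v × w`. -/
def skew (v : Fin 3 → ℝ) : Matrix (Fin 3) (Fin 3) ℝ :=
  !![0, -v 2, v 1; v 2, 0, -v 0; -v 1, v 0, 0]

/-- `(x, y)` is `(A, b)`-irregular. -/
def Irregular (A : Matrix (Fin 3) (Fin 3) ℝ) (b : Fin 3 → ℝ) (x y : Fin 2 → ℝ) : Prop :=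
  ((skew b * A).mulVec (hat x) = 0 ∧ Matrix.vecMul (hat y) (skew b) ≠ 0) ∨
  ((skew b * A).mulVec (hat x) ≠ 0 ∧ Matrix.vecMul (hat y) (skew b) = 0)

lemma skew_mulVec (v u : Fin 3 → ℝ) : (skew v).mulVec u = crossProduct v u := by
  funext i
  fin_cases i <;>
    simp [skew, Matrix.mulVec, dotProduct, Fin.sum_univ_three, cross_apply] <;> ring

lemma cam_mulVec' (A : Matrix (Fin 3) (Fin 3) ℝ) (b : Fin 3 → ℝ) (u : Fin 3 → ℝ) :
    (cam A b).mulVec (hat u) = A.mulVec u + b := by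
  funext i
  simp [cam, hat, Matrix.mulVec, dotProduct, Fin.sum_univ_castSucc]
  rw [show (3 : Fin 4) = Fin.last 3 from rfl, Fin.snoc_last, Fin.snoc_last, mul_one]

lemma skew_ker (v : Fin 3 → ℝ) (hv : v ≠ 0) :
    LinearMap.ker (skew v).mulVecLin = Submodule.span ℝ {v} := by
  ext u
  simp only [LinearMap.mem_ker, mulVecLin_apply, skew_mulVec, Submodule.mem_span_singleton]
  constructor
  · intro h
    by_contra hc
    push_neg at hc
    have hli : LinearIndependent ℝ ![v, u] := by
      by_contra hli
      rw [LinearIndependent.pair_iff' hv] at hli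
      push_neg at hli
      obtain ⟨a, ha⟩ := hli
      exact hc a ha
    exact (crossProduct_ne_zero_iff_linearIndependent.mpr hli) h
  · rintro ⟨a, rfl⟩
    rw [_root_.map_smul, cross_self, smul_zero]

lemma skew_rank (v : Fin 3 → ℝ) (hv : v ≠ 0) : (skew v).rank = 2 := by
  have h := (skew v).mulVecLin.finrank_range_add_finrank_ker
  rw [skew_ker v hv, finrank_span_singleton hv] at h
  simp only [Module.finrank_pi, Fintype.card_fin] at h
  rw [Matrix.rank]
  omega

/-- A finite reconstruction with cameras `(I 0)` and `(A b)` yields a fundamental matrix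
satisfying the epipolar constraints. -/
theorem stmt7 (m : ℕ) (x y : Fin m → Fin 2 → ℝ)
    (A : Matrix (Fin 3) (Fin 3) ℝ) (b : Fin 3 → ℝ) (hA : IsUnit A.det)
    (w : Fin m → Fin 3 → ℝ)
    (hrec : ∀ i, SimEq ((cam 1 0).mulVec (hat (w i))) (hat (x i)) ∧
                 SimEq ((cam A b).mulVec (hat (w i))) (hat (y i))) :
    ∃ F : Matrix (Fin 3) (Fin 3) ℝ, F.rank = 2 ∧
      ∀ i, hat (y i) ⬝ᵥ F.mulVec (hat (x i)) = 0 := by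
  set v : Fin 3 → ℝ := if b = 0 then ![1,0,0] else b with hv
  have hvne : v ≠ 0 := by
    rw [hv]
    split_ifs with hb
    · intro h
      have := congrFun h 0
      simp at this
    · exact hb
  refine ⟨skew v * A, ?_, ?_⟩
  · rw [Matrix.rank_mul_eq_left_of_isUnit_det A (skew v) hA, skew_rank v hvne]
  · intro i
    obtain ⟨⟨c, hc, hcx⟩, ⟨d, hd, hdy⟩⟩ := hrec i
    rw [cam_mulVec'] at hcx hdy
    rw [Matrix.one_mulVec, add_zero] at hcx
    set p : Fin 3 → ℝ := A.mulVec (hat (x i)) with hp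
    have hdy' : d • hat (y i) = c • p + b := by
      rw [← hdy, hcx, Matrix.mulVec_smul]
    have key : (d • hat (y i)) ⬝ᵥ (skew v * A).mulVec (hat (x i)) = 0 := by
      rw [hdy', ← Matrix.mulVec_mulVec, ← hp, skew_mulVec, add_dotProduct,
        smul_dotProduct, dot_cross_self, smul_zero, zero_add]
      rw [hv]
      split_ifs with hb
      · simp [hb]
      · exact dot_self_cross b p
    rw [smul_dotProduct, smul_eq_zero] at key
    tauto
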